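/- arXiv:1210.4640 — 2 statements merged into one kernel-verified Lean document; each statement's English description precedes it below -/
import Mathlib

section
/- Let N = 10, α = 199/200, and g(μ) = μ^{N²} + α·N²·(1-μ)·μ^{N²-1}. Then g is concave on the interval [α, 1], i.e., its second derivative is nonpositive there. -/
/-- With `N = 10`, `α = 199/200` and
`g μ = μ^(N²) + α N² (1-μ) μ^(N²-1)`, the function `g` is concave on `[α,1]`:
its second derivative is nonpositive there. -/
theorem g_second_deriv_nonpos :
    ∀ μ ∈ Set.Icc ((199 : ℝ) / 200) 1,
      deriv (deriv fun t : ℝ =>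
          t ^ (10 ^ 2) + (199 / 200) * (10 : ℝ) ^ 2 * (1 - t) * t ^ (10 ^ 2 - 1)) μ ≤ 0 := by
  intro μ hμ
  have hf : (fun t : ℝ =>
      t ^ (10 ^ 2) + (199 / 200) * (10 : ℝ) ^ 2 * (1 - t) * t ^ (10 ^ 2 - 1))
      = fun t : ℝ => (199 / 2) * t ^ 99 - (197 / 2) * t ^ 100 := by
    funext t
    norm_num
    ring
  rw [hf]
  have h1 : deriv (fun t : ℝ => (199 / 2) * t ^ 99 - (197 / 2) * t ^ 100)
      = fun t : ℝ => (19701 / 2) * t ^ 98 - 9850 * t ^ 99 := by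
    funext x
    have h : HasDerivAt (fun t : ℝ => (199 / 2) * t ^ 99 - (197 / 2) * t ^ 100)
        ((199 / 2) * ((99 : ℕ) * x ^ 98) - (197 / 2) * ((100 : ℕ) * x ^ 99)) x :=
      ((hasDerivAt_pow 99 x).const_mul _).sub ((hasDerivAt_pow 100 x).const_mul _)
    rw [h.deriv]
    push_cast
    ring
  rw [h1]
  have h2 : HasDerivAt (fun t : ℝ => (19701 / 2) * t ^ 98 - 9850 * t ^ 99)
      ((19701 / 2) * ((98 : ℕ) * μ ^ 97) - 9850 * ((99 : ℕ) * μ ^ 98)) μ :=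
    ((hasDerivAt_pow 98 μ).const_mul _).sub ((hasDerivAt_pow 99 μ).const_mul _)
  rw [h2.deriv]
  push_cast
  obtain ⟨hl, hr⟩ := hμ
  have h0 : (0 : ℝ) ≤ μ := by linarith
  have h97 : (0 : ℝ) ≤ μ ^ 97 := pow_nonneg h0 97
  have key : (μ - 199 / 200) * μ ^ 97 ≥ 0 := mul_nonneg (by linarith) h97
  nlinarith [key, h97]
end

section
/- Let g(μ) = μ^{100} + (199/200)·100·(1-μ)·μ^{99} and β = 1 - 10^{-5}. Then ∏_{i=1}^{∞} (1 - γ^i·(1-μ)) ≥ 1 - 10^{-4} for all μ ≥ β, where γ = (1 - g(β))/(1 - β). -/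
noncomputable def g (μ : ℝ) : ℝ := μ ^ 100 + (199 / 200) * 100 * (1 - μ) * μ ^ 99

noncomputable def β : ℝ := 1 - 10 ^ (-5 : ℤ)

noncomputable def γ : ℝ := (1 - g β) / (1 - β)

lemma gamma_nonneg : 0 ≤ γ := by norm_num [γ, g, β]
lemma gamma_le : γ ≤ 10/11 := by norm_num [γ, g, β]

lemma prod_one_sub_ge (s : Finset ℕ) (x : ℕ → ℝ) (h0 : ∀ i, 0 ≤ x i) (h1 : ∀ i, x i ≤ 1) :
    1 - ∑ i ∈ s, x i ≤ ∏ i ∈ s, (1 - x i) := by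
  classical
  induction s using Finset.cons_induction with
  | empty => simp
  | cons a s ha ih =>
    rw [Finset.prod_cons, Finset.sum_cons]
    have hS : 0 ≤ ∑ i ∈ s, x i := Finset.sum_nonneg fun i _ => h0 i
    have h1a : 0 ≤ 1 - x a := by linarith [h1 a]
    nlinarith [mul_le_mul_of_nonneg_left ih h1a, h0 a]


/-- For all `μ ≥ β`, `∏_{i=1}^∞ (1 - γ^i (1-μ)) ≥ 1 - 10⁻⁴`. -/
theorem infinite_product_ge (μ : ℝ) (hμ : β ≤ μ) :
    1 - 10 ^ (-4 : ℤ) ≤ ∏' i : ℕ, (1 - γ ^ (i + 1) * (1 - μ)) := by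
  have hγ0 := gamma_nonneg
  have hγ1 : γ < 1 := lt_of_le_of_lt gamma_le (by norm_num)
  set f : ℕ → ℝ := fun i => 1 - γ ^ (i + 1) * (1 - μ) with hf
  have key : ∀ s : Finset ℕ, (1 - 10 ^ (-4 : ℤ) : ℝ) ≤ ∏ i ∈ s, f i := by
    intro s
    by_cases hμ1 : μ ≤ 1
    · -- 0 ≤ 1 - μ ≤ 10⁻⁵
      have hε0 : 0 ≤ 1 - μ := by linarith
      have hε : 1 - μ ≤ 10 ^ (-5 : ℤ) := by
        have : (1 : ℝ) - 10 ^ (-5 : ℤ) ≤ μ := hμ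
        linarith
      have hx0 : ∀ i, 0 ≤ γ ^ (i + 1) * (1 - μ) := fun i =>
        mul_nonneg (pow_nonneg hγ0 _) hε0
      have hx1 : ∀ i, γ ^ (i + 1) * (1 - μ) ≤ 1 := by
        intro i
        have h1 : γ ^ (i + 1) ≤ 1 := pow_le_one₀ hγ0 hγ1.le
        have : γ ^ (i + 1) * (1 - μ) ≤ 1 * 1 :=
          mul_le_mul h1 (by norm_num at hε ⊢; linarith) hε0 one_pos.le
        linarith
      have hsum : ∑ i ∈ s, γ ^ (i + 1) * (1 - μ) ≤ 10 ^ (-4 : ℤ) := by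
        have hsummable : Summable (fun i : ℕ => γ ^ (i + 1) * (1 - μ)) := by
          have : Summable (fun i : ℕ => γ ^ i) := summable_geometric_of_lt_one hγ0 hγ1
          simpa [pow_succ, mul_comm, mul_assoc, mul_left_comm] using
            ((this.mul_left γ).mul_right (1 - μ))
        have h1 : ∑ i ∈ s, γ ^ (i + 1) * (1 - μ) ≤ ∑' i : ℕ, γ ^ (i + 1) * (1 - μ) :=
          Summable.sum_le_tsum s (fun i _ => hx0 i) hsummable
        have h2 : ∑' i : ℕ, γ ^ (i + 1) * (1 - μ) = γ * (1 - γ)⁻¹ * (1 - μ) := by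
          have : ∀ i : ℕ, γ ^ (i + 1) * (1 - μ) = γ * (1 - μ) * γ ^ i := by
            intro i; ring
          rw [tsum_congr this, tsum_mul_left, tsum_geometric_of_lt_one hγ0 hγ1]
          ring
        have hγfrac : γ * (1 - γ)⁻¹ ≤ 10 := by
          rw [← div_eq_mul_inv, div_le_iff₀ (by linarith)]
          have := gamma_le; linarith
        have h3 : γ * (1 - γ)⁻¹ * (1 - μ) ≤ 10 * (10 : ℝ) ^ (-5 : ℤ) := by
          apply mul_le_mul hγfrac hε hε0 (by norm_num)
        have : (10 : ℝ) * 10 ^ (-5 : ℤ) = 10 ^ (-4 : ℤ) := by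
          norm_num
        rw [h2] at h1
        calc ∑ i ∈ s, γ ^ (i + 1) * (1 - μ) ≤ γ * (1 - γ)⁻¹ * (1 - μ) := h1
          _ ≤ 10 * (10 : ℝ) ^ (-5 : ℤ) := h3
          _ = 10 ^ (-4 : ℤ) := this
      calc (1 : ℝ) - 10 ^ (-4 : ℤ) ≤ 1 - ∑ i ∈ s, γ ^ (i + 1) * (1 - μ) := by linarith
        _ ≤ ∏ i ∈ s, f i := prod_one_sub_ge s _ hx0 hx1
    · -- μ > 1 : each factor ≥ 1
      have : ∀ i ∈ s, (1 : ℝ) ≤ f i := by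
        intro i _
        have : γ ^ (i + 1) * (1 - μ) ≤ 0 :=
          mul_nonpos_of_nonneg_of_nonpos (pow_nonneg hγ0 _) (by linarith)
        simp [hf]; linarith
      have hp : (1 : ℝ) = ∏ _i ∈ s, (1 : ℝ) := by simp
      have h5 : ∏ _i ∈ s, (1 : ℝ) ≤ ∏ i ∈ s, f i :=
        Finset.prod_le_prod (fun i _ => by norm_num) this
      have h4 : (1 : ℝ) - 10 ^ (-4 : ℤ) ≤ 1 := by norm_num
      rw [hp] at h4
      linarith
  by_cases hm : Multipliable f
  · refine ge_of_tendsto hm.hasProd ?_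
    exact Filter.Eventually.of_forall key
  · rw [tprod_eq_one_of_not_multipliable hm]
    norm_num
end
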